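/- Let A be a real N×N matrix and b_0, b_1, …, b_p ∈ ℝ^N, and define w : ℝ → ℝ^N by w(t) = Σ_{j=0}^{p} t^j φ_j(tA) b_j. Fix t_i ∈ ℝ and τ_i ∈ ℝ, and define vectors w̃_0, …, w̃_p recursively by w̃_0 = w(t_i) and w̃_j = A w̃_{j−1} + Σ_{ℓ=0}^{p−j} (t_i^ℓ/ℓ!) b_{j+ℓ} for j = 1, …, p. Then w(t_i + τ_i) = τ_i^p φ_p(τ_i A) w̃_p + Σ_{j=0}^{p−1} (τ_i^j/j!) w̃_j. -/

import Mathlib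

open Matrix MeasureTheory
open scoped Nat

attribute [local instance] Matrix.normedAddCommGroup Matrix.normedSpace

/-- The matrix `φ`-functions: `φ₀(M) = e^M` and
`φ_k(M) = ∫_0^1 e^{(1-θ)M} θ^{k-1}/(k-1)! dθ` for `k ≥ 1`. -/
noncomputable def phi {n : ℕ} (k : ℕ) (M : Matrix (Fin n) (Fin n) ℝ) :
    Matrix (Fin n) (Fin n) ℝ :=
  if k = 0 then NormedSpace.exp M
  else ∫ θ in (0:ℝ)..1, ((θ ^ (k - 1) / (k - 1)! : ℝ)) • NormedSpace.exp ((1 - θ) • M)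

namespace Stmt13Aux

variable {N : ℕ}

noncomputable instance matCENorm : ContinuousENorm (Matrix (Fin N) (Fin N) ℝ) :=
  SeminormedAddGroup.toContinuousENorm

/-- `M ↦ M.mulVec v` as a continuous linear map. -/
noncomputable def mvCLM (v : Fin N → ℝ) :
    Matrix (Fin N) (Fin N) ℝ →L[ℝ] (Fin N → ℝ) :=
  LinearMap.toContinuousLinearMap
    { toFun := fun M => M.mulVec v
      map_add' := fun M M' => Matrix.add_mulVec M M' v
      map_smul' := fun c M => Matrix.smul_mulVec c M v }

@[simp] lemma mvCLM_apply (v : Fin N → ℝ) (M : Matrix (Fin N) (Fin N) ℝ) :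
    mvCLM v M = M.mulVec v := rfl

/-- `v ↦ M.mulVec v` as a continuous linear map. -/
noncomputable def mulVecCLM (M : Matrix (Fin N) (Fin N) ℝ) :
    (Fin N → ℝ) →L[ℝ] (Fin N → ℝ) :=
  LinearMap.toContinuousLinearMap M.mulVecLin

@[simp] lemma mulVecCLM_apply (M : Matrix (Fin N) (Fin N) ℝ) (v : Fin N → ℝ) :
    mulVecCLM M v = M.mulVec v := rfl

lemma norm_mulVec_le (M : Matrix (Fin N) (Fin N) ℝ) (v : Fin N → ℝ) :
    ‖M.mulVec v‖ ≤ (N * ‖M‖) * ‖v‖ := by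
  rw [pi_norm_le_iff_of_nonneg (by positivity)]
  intro i
  have : M.mulVec v i = ∑ k, M i k * v k := rfl
  rw [this]
  calc ‖∑ k, M i k * v k‖ ≤ ∑ k, ‖M i k * v k‖ := norm_sum_le _ _
    _ ≤ ∑ _k : Fin N, ‖M‖ * ‖v‖ := by
        refine Finset.sum_le_sum fun k _ => ?_
        rw [norm_mul]
        exact mul_le_mul (M.norm_entry_le_entrywise_sup_norm)
          (norm_le_pi_norm v k) (norm_nonneg _) (norm_nonneg _)
    _ = N * ‖M‖ * ‖v‖ := by simp [Finset.sum_const, mul_assoc]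

lemma norm_pow_mulVec_le (M : Matrix (Fin N) (Fin N) ℝ) (n : ℕ) (v : Fin N → ℝ) :
    ‖(M ^ n).mulVec v‖ ≤ (N * ‖M‖) ^ n * ‖v‖ := by
  induction n generalizing v with
  | zero => simp [Matrix.one_mulVec]
  | succ n ih =>
      have h1 : (M ^ (n + 1)).mulVec v = (M ^ n).mulVec (M.mulVec v) := by
        rw [Matrix.mulVec_mulVec, ← pow_succ]
      rw [h1]
      calc ‖(M ^ n).mulVec (M.mulVec v)‖ ≤ (N * ‖M‖) ^ n * ‖M.mulVec v‖ := ih _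
        _ ≤ (N * ‖M‖) ^ n * ((N * ‖M‖) * ‖v‖) := by
            refine mul_le_mul_of_nonneg_left (norm_mulVec_le M v) (by positivity)
        _ = (N * ‖M‖) ^ (n + 1) * ‖v‖ := by ring

lemma norm_mul_le' (P M : Matrix (Fin N) (Fin N) ℝ) :
    ‖P * M‖ ≤ ‖P‖ * (N * ‖M‖) := by
  rw [Matrix.norm_le_iff (by positivity)]
  intro i j
  have : (P * M) i j = ∑ k, P i k * M k j := by simp [Matrix.mul_apply]
  rw [this]
  calc ‖∑ k, P i k * M k j‖ ≤ ∑ k, ‖P i k * M k j‖ := norm_sum_le _ _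
    _ ≤ ∑ _k : Fin N, ‖P‖ * ‖M‖ := by
        refine Finset.sum_le_sum fun k _ => ?_
        rw [norm_mul]
        exact mul_le_mul (P.norm_entry_le_entrywise_sup_norm)
          (M.norm_entry_le_entrywise_sup_norm) (norm_nonneg _) (norm_nonneg _)
    _ = ‖P‖ * (N * ‖M‖) := by simp [Finset.sum_const]; ring

lemma norm_pow_le' (M : Matrix (Fin N) (Fin N) ℝ) (n : ℕ) :
    ‖M ^ n‖ ≤ ‖(1 : Matrix (Fin N) (Fin N) ℝ)‖ * (N * ‖M‖) ^ n := by
  induction n with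
  | zero => simp
  | succ n ih =>
      calc ‖M ^ (n + 1)‖ = ‖M ^ n * M‖ := by rw [pow_succ]
        _ ≤ ‖M ^ n‖ * (N * ‖M‖) := norm_mul_le' _ _
        _ ≤ (‖(1 : Matrix (Fin N) (Fin N) ℝ)‖ * (N * ‖M‖) ^ n) * (N * ‖M‖) := by
            refine mul_le_mul_of_nonneg_right ih (by positivity)
        _ = ‖(1 : Matrix (Fin N) (Fin N) ℝ)‖ * (N * ‖M‖) ^ (n + 1) := by ring

lemma expMatrix_hasSum (M : Matrix (Fin N) (Fin N) ℝ) (s : ℝ) :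
    HasSum (fun n => (((n : ℕ)! : ℝ)⁻¹ * s ^ n) • M ^ n) (NormedSpace.exp (s • M)) := by
  have hsumm : Summable (fun n => (((n : ℕ)! : ℝ)⁻¹ * s ^ n) • M ^ n) := by
    refine Summable.of_norm_bounded
      (g := fun n => ‖(1 : Matrix (Fin N) (Fin N) ℝ)‖ * ((|s| * (N * ‖M‖)) ^ n / n !))
      (((Real.summable_pow_div_factorial _).mul_left _)) (fun n => ?_)
    rw [norm_smul]
    have h1 : ‖((n ! : ℝ)⁻¹ * s ^ n)‖ = (n ! : ℝ)⁻¹ * |s| ^ n := by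
      rw [Real.norm_eq_abs, abs_mul, abs_pow, abs_inv,
        abs_of_nonneg (by positivity : (0:ℝ) ≤ (n ! : ℝ))]
    rw [h1]
    calc ((n ! : ℝ)⁻¹ * |s| ^ n) * ‖M ^ n‖
        ≤ ((n ! : ℝ)⁻¹ * |s| ^ n) * (‖(1 : Matrix (Fin N) (Fin N) ℝ)‖ * (N * ‖M‖) ^ n) :=
          mul_le_mul_of_nonneg_left (norm_pow_le' M n) (by positivity)
      _ = ‖(1 : Matrix (Fin N) (Fin N) ℝ)‖ * ((|s| * (N * ‖M‖)) ^ n / n !) := by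
          rw [mul_pow]; field_simp; ring
  have h : NormedSpace.exp (s • M) = ∑' n : ℕ, (((n : ℕ)! : ℝ)⁻¹ * s ^ n) • M ^ n := by
    rw [NormedSpace.exp_eq_tsum ℝ]
    refine tsum_congr fun n => ?_
    rw [smul_pow, smul_smul]
  rw [h]
  exact hsumm.hasSum

lemma prod_fact (a : ℕ) : ∀ c : ℕ, a ! * ∏ j ∈ Finset.range (c + 1), (a + 1 + j) = (a + c + 1)!
  | 0 => by simp [Nat.factorial_succ]; ring
  | (c + 1) => by
      rw [Finset.prod_range_succ, ← mul_assoc, prod_fact a c]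
      have h : a + (c + 1) + 1 = (a + c + 1) + 1 := by omega
      have h2 : a + 1 + (c + 1) = (a + c + 1) + 1 := by omega
      rw [h, h2, mul_comm, ← Nat.factorial_succ]

lemma beta_nat (a c : ℕ) :
    ∫ θ in (0:ℝ)..1, θ ^ a * (1 - θ) ^ c = (a ! * c ! : ℝ) / (a + c + 1)! := by
  have h1 : Complex.betaIntegral (a + 1) (c + 1)
      = ((∫ θ in (0:ℝ)..1, θ ^ a * (1 - θ) ^ c : ℝ) : ℂ) := by
    rw [← intervalIntegral.integral_ofReal, Complex.betaIntegral]
    refine intervalIntegral.integral_congr fun x _ => ?_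
    push_cast
    rw [add_sub_cancel_right, add_sub_cancel_right]
    rw [Complex.cpow_natCast, Complex.cpow_natCast]
  have h2 := Complex.betaIntegral_eval_nat_add_one_right
    (u := (a : ℂ) + 1) (by simp; positivity) c
  have hane : ((a)! : ℂ) ≠ 0 := by exact_mod_cast Nat.factorial_ne_zero _
  have key : ((a)! : ℂ) * ∏ j ∈ Finset.range (c + 1), ((a : ℂ) + 1 + (j : ℂ))
      = ((a + c + 1)! : ℂ) := by exact_mod_cast prod_fact a c
  have h3 : ∏ j ∈ Finset.range (c + 1), ((a : ℂ) + 1 + (j : ℂ))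
      = ((a + c + 1)! : ℂ) / (a ! : ℂ) := by
    rw [eq_div_iff hane, mul_comm]; exact key
  rw [h3] at h2
  rw [h1] at h2
  have hne : ((a + c + 1)! : ℂ) ≠ 0 := by exact_mod_cast Nat.factorial_ne_zero _
  have : ((∫ θ in (0:ℝ)..1, θ ^ a * (1 - θ) ^ c : ℝ) : ℂ)
      = ((a ! * c ! : ℝ) / ((a + c + 1)! : ℝ) : ℂ) := by
    rw [h2]
    push_cast
    field_simp
  exact_mod_cast this

lemma phi_hasSum (M : Matrix (Fin N) (Fin N) ℝ) (k : ℕ) (s : ℝ) :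
    HasSum (fun n => (s ^ n * (((n + k)! : ℝ))⁻¹) • M ^ n) (phi k (s • M)) := by
  have hnorm : ∀ (c : ℝ) (n : ℕ), ‖c • M ^ n‖
      ≤ |c| * (‖(1 : Matrix (Fin N) (Fin N) ℝ)‖ * (N * ‖M‖) ^ n) := fun c n => by
    rw [norm_smul, Real.norm_eq_abs]
    exact mul_le_mul_of_nonneg_left (norm_pow_le' M n) (abs_nonneg _)
  have hcoef : ∀ n : ℕ, |s ^ n * (((n + k)! : ℝ))⁻¹| ≤ |s| ^ n * ((n ! : ℝ))⁻¹ := fun n => by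
    rw [abs_mul, abs_pow, abs_inv, abs_of_nonneg (by positivity : (0:ℝ) ≤ ((n + k)! : ℝ))]
    gcongr
    exact Nat.le_add_right n k
  have hsumm : Summable (fun n => (s ^ n * (((n + k)! : ℝ))⁻¹) • M ^ n) := by
    refine Summable.of_norm_bounded
      (g := fun n => ‖(1 : Matrix (Fin N) (Fin N) ℝ)‖ * ((|s| * (N * ‖M‖)) ^ n / n !))
      ((Real.summable_pow_div_factorial _).mul_left _) fun n => ?_
    calc ‖(s ^ n * (((n + k)! : ℝ))⁻¹) • M ^ n‖
        ≤ (|s| ^ n * ((n ! : ℝ))⁻¹) * (‖(1 : Matrix (Fin N) (Fin N) ℝ)‖ * (N * ‖M‖) ^ n) := by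
          refine le_trans (hnorm _ n) (mul_le_mul_of_nonneg_right (hcoef n) (by positivity))
      _ = ‖(1 : Matrix (Fin N) (Fin N) ℝ)‖ * ((|s| * (N * ‖M‖)) ^ n / n !) := by
          rw [mul_pow]; field_simp; ring
  suffices h : phi k (s • M) = ∑' n, (s ^ n * (((n + k)! : ℝ))⁻¹) • M ^ n by
    rw [h]; exact hsumm.hasSum
  cases k with
  | zero =>
      simp only [phi, if_pos rfl]
      rw [← (expMatrix_hasSum M s).tsum_eq]
      exact tsum_congr fun n => by rw [mul_comm]; norm_num
  | succ k =>
      have hphi : phi (k + 1) (s • M)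
          = ∫ θ in Set.Ioc (0:ℝ) 1,
              ((θ ^ k / k ! : ℝ)) • NormedSpace.exp ((1 - θ) • (s • M)) := by
        rw [phi, if_neg (Nat.succ_ne_zero k), intervalIntegral.integral_of_le zero_le_one]
        norm_num
      set F : ℕ → ℝ → Matrix (Fin N) (Fin N) ℝ :=
        fun n θ => ((θ ^ k / k !) * ((n ! : ℝ)⁻¹ * ((1 - θ) * s) ^ n)) • M ^ n with hF
      have hInt : ∀ θ : ℝ, ((θ ^ k / k ! : ℝ)) • NormedSpace.exp ((1 - θ) • (s • M))
          = ∑' n, F n θ := by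
        intro θ
        rw [smul_smul (1 - θ) s M]
        refine (((expMatrix_hasSum M ((1 - θ) * s)).const_smul
          ((θ ^ k / k ! : ℝ))).tsum_eq.symm).trans (tsum_congr fun n => ?_)
        rw [smul_smul]
      have hIntg : ∀ n, IntegrableOn (F n) (Set.Ioc (0:ℝ) 1) volume := fun n => by
        apply Continuous.integrableOn_Ioc
        fun_prop
      set B : ℕ → ℝ := fun n =>
        (k ! : ℝ)⁻¹ * (‖(1 : Matrix (Fin N) (Fin N) ℝ)‖ * ((|s| * (N * ‖M‖)) ^ n / n !)) with hB
      have hBnd : ∀ n, ∫ θ in Set.Ioc (0:ℝ) 1, ‖F n θ‖ ≤ B n := fun n => by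
        have hle : ∀ θ ∈ Set.Ioc (0:ℝ) 1, ‖F n θ‖ ≤ B n := fun θ hθ => by
          obtain ⟨h0, h1⟩ := hθ
          have e1 : |θ ^ k / k ! * ((n ! : ℝ)⁻¹ * ((1 - θ) * s) ^ n)|
              ≤ (k ! : ℝ)⁻¹ * ((n ! : ℝ)⁻¹ * |s| ^ n) := by
            simp only [abs_mul, abs_div, abs_inv, abs_pow, mul_pow, Nat.abs_cast]
            have hθ1 : |θ| ^ k ≤ 1 := by
              refine pow_le_one₀ (abs_nonneg _) ?_
              rw [abs_of_pos h0]; exact h1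
            have hθ2 : |1 - θ| ^ n ≤ 1 := by
              refine pow_le_one₀ (abs_nonneg _) ?_
              rw [abs_of_nonneg (by linarith)]; linarith
            calc |θ| ^ k / (k !) * ((n ! : ℝ)⁻¹ * (|1 - θ| ^ n * |s| ^ n))
                ≤ 1 / (k !) * ((n ! : ℝ)⁻¹ * (1 * |s| ^ n)) := by gcongr
              _ = (k ! : ℝ)⁻¹ * ((n ! : ℝ)⁻¹ * |s| ^ n) := by rw [one_div, one_mul]
          calc ‖F n θ‖
              ≤ |θ ^ k / k ! * ((n ! : ℝ)⁻¹ * ((1 - θ) * s) ^ n)|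
                * (‖(1 : Matrix (Fin N) (Fin N) ℝ)‖ * (N * ‖M‖) ^ n) := hnorm _ n
            _ ≤ ((k ! : ℝ)⁻¹ * ((n ! : ℝ)⁻¹ * |s| ^ n))
                * (‖(1 : Matrix (Fin N) (Fin N) ℝ)‖ * (N * ‖M‖) ^ n) := by
                exact mul_le_mul_of_nonneg_right e1 (by positivity)
            _ = B n := by rw [hB, mul_pow]; field_simp; ring
        calc ∫ θ in Set.Ioc (0:ℝ) 1, ‖F n θ‖
            ≤ ∫ _θ in Set.Ioc (0:ℝ) 1, B n :=
              setIntegral_mono_on (hIntg n).norm (integrableOn_const (by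
                rw [Real.volume_Ioc]; norm_num)) measurableSet_Ioc hle
          _ = B n := by simp [Real.volume_Ioc]
      have hsum2 : Summable fun n => ∫ θ in Set.Ioc (0:ℝ) 1, ‖F n θ‖ := by
        refine Summable.of_nonneg_of_le (fun n => integral_nonneg fun θ => norm_nonneg _)
          hBnd ?_
        exact ((Real.summable_pow_div_factorial _).mul_left _).mul_left _
      rw [hphi]
      simp only [hInt]
      have hswap : ∫ θ in Set.Ioc (0:ℝ) 1, ∑' n, F n θ = ∑' n, ∫ θ in Set.Ioc (0:ℝ) 1, F n θ :=
        (integral_tsum_of_summable_integral_norm (fun n => hIntg n) hsum2).symm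
      rw [hswap]
      refine tsum_congr fun n => ?_
      have h1 : ∀ θ : ℝ, F n θ
          = (θ ^ k * (1 - θ) ^ n) • (((k ! : ℝ)⁻¹ * (n ! : ℝ)⁻¹ * s ^ n) • M ^ n) := fun θ => by
        show (θ ^ k / (k ! : ℝ) * ((n ! : ℝ)⁻¹ * ((1 - θ) * s) ^ n)) • M ^ n = _
        rw [smul_smul]
        congr 1
        rw [mul_pow]; field_simp
      simp only [h1]
      rw [integral_smul_const]
      rw [← intervalIntegral.integral_of_le zero_le_one, beta_nat k n, smul_smul]
      congr 1
      have hkn : n + (k + 1) = k + n + 1 := by omega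
      rw [hkn]
      have h2 : ((k + n + 1)! : ℝ) ≠ 0 := by exact_mod_cast Nat.factorial_ne_zero _
      have h3 : ((k)! : ℝ) ≠ 0 := by exact_mod_cast Nat.factorial_ne_zero _
      have h4 : ((n)! : ℝ) ≠ 0 := by exact_mod_cast Nat.factorial_ne_zero _
      field_simp

lemma phi_mulVec_hasSum (M : Matrix (Fin N) (Fin N) ℝ) (k : ℕ) (s : ℝ) (v : Fin N → ℝ) :
    HasSum (fun n => (s ^ n * (((n + k)! : ℝ))⁻¹) • (M ^ n).mulVec v)
      ((phi k (s • M)).mulVec v) := by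
  have h := (mvCLM v).hasSum (phi_hasSum M k s)
  simpa using h

/-- The Taylor-type coefficients of `w`. -/
noncomputable def cseq (A : Matrix (Fin N) (Fin N) ℝ) (b : ℕ → Fin N → ℝ) (p m : ℕ) :
    Fin N → ℝ :=
  ((m ! : ℝ)⁻¹) • ∑ j ∈ Finset.range (p + 1), if j ≤ m then (A ^ (m - j)).mulVec (b j) else 0

/-- The derivatives of `w` at `t`. -/
noncomputable def dseq (A : Matrix (Fin N) (Fin N) ℝ) (b : ℕ → Fin N → ℝ) (p : ℕ) (t : ℝ)
    (j : ℕ) : Fin N → ℝ :=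
  ∑' m : ℕ, ((((m + j)! : ℝ) / (m ! : ℝ)) * t ^ m) • cseq A b p (m + j)

variable (A : Matrix (Fin N) (Fin N) ℝ) (b : ℕ → Fin N → ℝ) (p : ℕ)

lemma cseq_norm_le (m : ℕ) :
    ‖cseq A b p m‖ ≤ ((∑ j ∈ Finset.range (p + 1), ‖b j‖) * (max 1 (N * ‖A‖)) ^ m) / m ! := by
  have hK1 : (1:ℝ) ≤ max 1 (N * ‖A‖) := le_max_left _ _
  have hK0 : (0:ℝ) ≤ max 1 (N * ‖A‖) := le_trans zero_le_one hK1
  rw [cseq, norm_smul, Real.norm_eq_abs, abs_inv,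
    abs_of_nonneg (by positivity : (0:ℝ) ≤ (m ! : ℝ))]
  rw [inv_mul_eq_div, div_le_div_iff_of_pos_right (by positivity : (0:ℝ) < (m ! : ℝ))]
  calc ‖∑ j ∈ Finset.range (p + 1), if j ≤ m then (A ^ (m - j)).mulVec (b j) else 0‖
      ≤ ∑ j ∈ Finset.range (p + 1), ‖if j ≤ m then (A ^ (m - j)).mulVec (b j) else 0‖ :=
        norm_sum_le _ _
    _ ≤ ∑ j ∈ Finset.range (p + 1), ‖b j‖ * (max 1 (N * ‖A‖)) ^ m := by
        refine Finset.sum_le_sum fun j _ => ?_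
        by_cases hj : j ≤ m
        · rw [if_pos hj]
          calc ‖(A ^ (m - j)).mulVec (b j)‖ ≤ (N * ‖A‖) ^ (m - j) * ‖b j‖ :=
                norm_pow_mulVec_le A (m - j) (b j)
            _ ≤ (max 1 (N * ‖A‖)) ^ (m - j) * ‖b j‖ := by
                refine mul_le_mul_of_nonneg_right
                  (pow_le_pow_left₀ (by positivity) (le_max_right _ _) _) (norm_nonneg _)
            _ ≤ (max 1 (N * ‖A‖)) ^ m * ‖b j‖ := by
                refine mul_le_mul_of_nonneg_right
                  (pow_le_pow_right₀ hK1 (Nat.sub_le m j)) (norm_nonneg _)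
            _ = ‖b j‖ * (max 1 (N * ‖A‖)) ^ m := mul_comm _ _
        · rw [if_neg hj, norm_zero]
          positivity
    _ = (∑ j ∈ Finset.range (p + 1), ‖b j‖) * (max 1 (N * ‖A‖)) ^ m := by
        rw [Finset.sum_mul]

lemma summable_dterm (t : ℝ) (j : ℕ) :
    Summable (fun m => ((((m + j)! : ℝ) / (m ! : ℝ)) * t ^ m) • cseq A b p (m + j)) := by
  have hK1 : (1:ℝ) ≤ max 1 (N * ‖A‖) := le_max_left _ _
  refine Summable.of_norm_bounded
    (g := fun m => ((∑ i ∈ Finset.range (p + 1), ‖b i‖) * (max 1 (N * ‖A‖)) ^ j)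
      * ((|t| * max 1 (N * ‖A‖)) ^ m / m !))
    (((Real.summable_pow_div_factorial _).mul_left _)) fun m => ?_
  rw [norm_smul, Real.norm_eq_abs, abs_mul, abs_div, abs_pow,
    abs_of_nonneg (by positivity : (0:ℝ) ≤ ((m + j)! : ℝ)),
    abs_of_nonneg (by positivity : (0:ℝ) ≤ (m ! : ℝ))]
  calc ((m + j)! : ℝ) / m ! * |t| ^ m * ‖cseq A b p (m + j)‖
      ≤ ((m + j)! : ℝ) / m ! * |t| ^ m
        * (((∑ i ∈ Finset.range (p + 1), ‖b i‖) * (max 1 (N * ‖A‖)) ^ (m + j)) / (m + j)!) := by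
        refine mul_le_mul_of_nonneg_left (cseq_norm_le A b p (m + j)) (by positivity)
    _ = ((∑ i ∈ Finset.range (p + 1), ‖b i‖) * (max 1 (N * ‖A‖)) ^ j)
        * ((|t| * max 1 (N * ‖A‖)) ^ m / m !) := by
        have h1 : ((m + j)! : ℝ) ≠ 0 := by positivity
        have h2 : ((m)! : ℝ) ≠ 0 := by positivity
        rw [pow_add, mul_pow]
        field_simp

lemma dseq_norm_le (t : ℝ) (j : ℕ) :
    ‖dseq A b p t j‖ ≤ ((∑ i ∈ Finset.range (p + 1), ‖b i‖) * (max 1 (N * ‖A‖)) ^ j)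
      * Real.exp (|t| * max 1 (N * ‖A‖)) := by
  have hsum := summable_dterm A b p t j
  calc ‖dseq A b p t j‖ ≤ ∑' m, ‖((((m + j)! : ℝ) / (m ! : ℝ)) * t ^ m) • cseq A b p (m + j)‖ :=
        norm_tsum_le_tsum_norm (hsum.norm)
    _ ≤ ∑' m : ℕ, ((∑ i ∈ Finset.range (p + 1), ‖b i‖) * (max 1 (N * ‖A‖)) ^ j)
        * ((|t| * max 1 (N * ‖A‖)) ^ m / m !) := by
        refine Summable.tsum_le_tsum (fun m => ?_) hsum.norm
          (((Real.summable_pow_div_factorial _).mul_left _))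
        -- same bound as in summable_dterm
        rw [norm_smul, Real.norm_eq_abs, abs_mul, abs_div, abs_pow,
          abs_of_nonneg (by positivity : (0:ℝ) ≤ ((m + j)! : ℝ)),
          abs_of_nonneg (by positivity : (0:ℝ) ≤ (m ! : ℝ))]
        calc ((m + j)! : ℝ) / m ! * |t| ^ m * ‖cseq A b p (m + j)‖
            ≤ ((m + j)! : ℝ) / m ! * |t| ^ m
              * (((∑ i ∈ Finset.range (p + 1), ‖b i‖) * (max 1 (N * ‖A‖)) ^ (m + j))
                / (m + j)!) := by
              refine mul_le_mul_of_nonneg_left (cseq_norm_le A b p (m + j)) (by positivity)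
          _ = ((∑ i ∈ Finset.range (p + 1), ‖b i‖) * (max 1 (N * ‖A‖)) ^ j)
              * ((|t| * max 1 (N * ‖A‖)) ^ m / m !) := by
              have h1 : ((m + j)! : ℝ) ≠ 0 := by positivity
              have h2 : ((m)! : ℝ) ≠ 0 := by positivity
              rw [pow_add, mul_pow]
              field_simp
    _ = ((∑ i ∈ Finset.range (p + 1), ‖b i‖) * (max 1 (N * ‖A‖)) ^ j)
        * Real.exp (|t| * max 1 (N * ‖A‖)) := by
        rw [tsum_mul_left, Real.exp_eq_exp_ℝ, NormedSpace.exp_eq_tsum_div]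

lemma A_mulVec_cseq (m : ℕ) :
    A.mulVec (cseq A b p m)
      = ((m + 1 : ℝ)) • cseq A b p (m + 1)
        - (if m + 1 ≤ p then ((m ! : ℝ)⁻¹) • b (m + 1) else 0) := by
  have hL : A.mulVec (cseq A b p m)
      = ((m ! : ℝ)⁻¹) • ∑ j ∈ Finset.range (p + 1),
          if j ≤ m then (A ^ (m + 1 - j)).mulVec (b j) else 0 := by
    rw [cseq, Matrix.mulVec_smul]
    congr 1
    have hms := map_sum (Matrix.mulVecLin A)
      (fun j => if j ≤ m then (A ^ (m - j)).mulVec (b j) else 0) (Finset.range (p + 1))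
    simp only [Matrix.mulVecLin_apply] at hms
    rw [hms]
    refine Finset.sum_congr rfl fun j _ => ?_
    by_cases hj : j ≤ m
    · rw [if_pos hj, if_pos hj, Matrix.mulVec_mulVec, ← pow_succ']
      have : m - j + 1 = m + 1 - j := by omega
      rw [this]
    · rw [if_neg hj, if_neg hj, Matrix.mulVec_zero]
  have hR : ((m + 1 : ℝ)) • cseq A b p (m + 1)
      = ((m ! : ℝ)⁻¹) • ∑ j ∈ Finset.range (p + 1),
          if j ≤ m + 1 then (A ^ (m + 1 - j)).mulVec (b j) else 0 := by
    rw [cseq, smul_smul]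
    congr 1
    have e1 : (((m + 1))! : ℝ) = (m + 1) * m ! := by exact_mod_cast Nat.factorial_succ m
    rw [e1]
    have e2 : ((m)! : ℝ) ≠ 0 := Nat.cast_ne_zero.mpr (Nat.factorial_ne_zero m)
    field_simp
  have hsplit : ∀ j ∈ Finset.range (p + 1),
      (if j ≤ m + 1 then (A ^ (m + 1 - j)).mulVec (b j) else 0)
        = (if j ≤ m then (A ^ (m + 1 - j)).mulVec (b j) else 0)
          + (if j = m + 1 then b j else 0) := by
    intro j _
    by_cases hj : j ≤ m
    · rw [if_pos (by omega), if_pos hj, if_neg (by omega), add_zero]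
    · by_cases hj2 : j = m + 1
      · rw [if_pos (by omega), if_neg hj, if_pos hj2, zero_add, hj2]
        have : m + 1 - (m + 1) = 0 := by omega
        rw [this, pow_zero, Matrix.one_mulVec]
      · rw [if_neg (by omega), if_neg hj, if_neg hj2, add_zero]
  rw [hL, hR, Finset.sum_congr rfl hsplit, Finset.sum_add_distrib, smul_add]
  have hlast : ∑ j ∈ Finset.range (p + 1), (if j = m + 1 then b j else 0)
      = if m + 1 ≤ p then b (m + 1) else 0 := by
    rw [Finset.sum_ite_eq' (Finset.range (p + 1)) (m + 1) b]
    congr 1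
    simp only [Finset.mem_range]
    exact propext Nat.lt_succ_iff
  rw [hlast]
  have hite : ((m ! : ℝ)⁻¹) • (if m + 1 ≤ p then b (m + 1) else 0)
      = (if m + 1 ≤ p then ((m ! : ℝ)⁻¹) • b (m + 1) else 0) := by
    by_cases hc : m + 1 ≤ p
    · rw [if_pos hc, if_pos hc]
    · rw [if_neg hc, if_neg hc, smul_zero]
  rw [hite, add_sub_cancel_right]

lemma pow_mulVec_cseq (n r : ℕ) (hr : p ≤ r) :
    (A ^ n).mulVec (cseq A b p r) = (((r + n)! : ℝ) / (r ! : ℝ)) • cseq A b p (r + n) := by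
  induction n with
  | zero =>
      have : ((r + 0)! : ℝ) / (r ! : ℝ) = 1 :=
        div_self (Nat.cast_ne_zero.mpr (Nat.factorial_ne_zero r))
      rw [pow_zero, Matrix.one_mulVec, this, one_smul]
      norm_num
  | succ n ih =>
      have h1 : (A ^ (n + 1)).mulVec (cseq A b p r)
          = A.mulVec ((A ^ n).mulVec (cseq A b p r)) := by
        rw [Matrix.mulVec_mulVec, ← pow_succ']
      rw [h1, ih, Matrix.mulVec_smul, A_mulVec_cseq, if_neg (by omega), sub_zero, smul_smul]
      have h2 : r + (n + 1) = (r + n) + 1 := by omega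
      rw [h2]
      congr 1
      have e1 : (((r + n) + 1)! : ℝ) = ((r + n) + 1) * (r + n)! := by
        exact_mod_cast Nat.factorial_succ (r + n)
      have e2 : ((r)! : ℝ) ≠ 0 := Nat.cast_ne_zero.mpr (Nat.factorial_ne_zero r)
      rw [e1]
      push_cast
      field_simp

lemma A_mulVec_dseq (t : ℝ) (i : ℕ) (h : i + 1 ≤ p) :
    A.mulVec (dseq A b p t i)
      = dseq A b p t (i + 1)
        - ∑ ℓ ∈ Finset.range (p - (i + 1) + 1), (t ^ ℓ / (ℓ ! : ℝ)) • b ((i + 1) + ℓ) := by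
  have hsum := summable_dterm A b p t i
  have step1 : A.mulVec (dseq A b p t i)
      = ∑' m : ℕ, ((((m + i)! : ℝ) / (m ! : ℝ)) * t ^ m) • (A.mulVec (cseq A b p (m + i))) := by
    rw [dseq, ← mulVecCLM_apply, ContinuousLinearMap.map_tsum _ hsum]
    refine tsum_congr fun m => ?_
    rw [_root_.map_smul, mulVecCLM_apply]
  rw [step1]
  have step2 : ∀ m : ℕ,
      ((((m + i)! : ℝ) / (m ! : ℝ)) * t ^ m) • (A.mulVec (cseq A b p (m + i)))
        = ((((m + (i + 1))! : ℝ) / (m ! : ℝ)) * t ^ m) • cseq A b p (m + (i + 1))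
          - (if m + (i + 1) ≤ p then (t ^ m / (m ! : ℝ)) • b (m + (i + 1)) else 0) := by
    intro m
    rw [A_mulVec_cseq, smul_sub]
    have hidx : m + i + 1 = m + (i + 1) := by omega
    have e2 : ((m)! : ℝ) ≠ 0 := Nat.cast_ne_zero.mpr (Nat.factorial_ne_zero m)
    have e3 : ((m + i)! : ℝ) ≠ 0 := Nat.cast_ne_zero.mpr (Nat.factorial_ne_zero (m + i))
    congr 1
    · rw [smul_smul, hidx]
      congr 1
      have e1 : ((m + (i + 1))! : ℝ) = ((m + i) + 1) * (m + i)! := by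
        rw [← hidx]
        exact_mod_cast Nat.factorial_succ (m + i)
      rw [e1]
      push_cast
      field_simp
    · rw [hidx]
      by_cases hc : m + (i + 1) ≤ p
      · rw [if_pos hc, if_pos hc, smul_smul]
        congr 1
        field_simp
      · rw [if_neg hc, if_neg hc, smul_zero]
  have hsum1 := summable_dterm A b p t (i + 1)
  have hsum2 : Summable (fun m : ℕ =>
      if m + (i + 1) ≤ p then (t ^ m / (m ! : ℝ)) • b (m + (i + 1)) else 0) := by
    refine summable_of_ne_finset_zero (s := Finset.range (p - (i + 1) + 1)) fun m hm => ?_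
    rw [if_neg]
    simp only [Finset.mem_range] at hm
    omega
  calc ∑' m : ℕ, ((((m + i)! : ℝ) / (m ! : ℝ)) * t ^ m) • (A.mulVec (cseq A b p (m + i)))
      = ∑' m : ℕ, (((((m + (i + 1))! : ℝ) / (m ! : ℝ)) * t ^ m) • cseq A b p (m + (i + 1))
          - (if m + (i + 1) ≤ p then (t ^ m / (m ! : ℝ)) • b (m + (i + 1)) else 0)) :=
        tsum_congr step2
    _ = dseq A b p t (i + 1)
        - ∑' m : ℕ, (if m + (i + 1) ≤ p then (t ^ m / (m ! : ℝ)) • b (m + (i + 1)) else 0) := by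
        rw [Summable.tsum_sub hsum1 hsum2, dseq]
    _ = dseq A b p t (i + 1)
        - ∑ ℓ ∈ Finset.range (p - (i + 1) + 1), (t ^ ℓ / (ℓ ! : ℝ)) • b ((i + 1) + ℓ) := by
        congr 1
        rw [tsum_eq_sum (s := Finset.range (p - (i + 1) + 1)) (fun m hm => by
          rw [if_neg]
          simp only [Finset.mem_range] at hm
          omega)]
        refine Finset.sum_congr rfl fun ℓ hℓ => ?_
        simp only [Finset.mem_range] at hℓ
        have hidx2 : ℓ + (i + 1) = (i + 1) + ℓ := by omega
        rw [if_pos (by omega), hidx2]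

lemma pow_mulVec_dseq (t : ℝ) (n : ℕ) :
    (A ^ n).mulVec (dseq A b p t p) = dseq A b p t (n + p) := by
  rw [dseq, ← mulVecCLM_apply, ContinuousLinearMap.map_tsum _ (summable_dterm A b p t p), dseq]
  refine tsum_congr fun m => ?_
  rw [_root_.map_smul, mulVecCLM_apply, pow_mulVec_cseq A b p n (m + p) (by omega), smul_smul]
  have h1 : m + p + n = m + (n + p) := by omega
  rw [h1]
  congr 1
  have e1 : ((m + p)! : ℝ) ≠ 0 := Nat.cast_ne_zero.mpr (Nat.factorial_ne_zero (m + p))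
  have e2 : ((m)! : ℝ) ≠ 0 := Nat.cast_ne_zero.mpr (Nat.factorial_ne_zero m)
  field_simp

end Stmt13Aux

set_option maxHeartbeats 2000000 in
theorem stmt13 {N p : ℕ} (A : Matrix (Fin N) (Fin N) ℝ) (b : ℕ → Fin N → ℝ)
    (w : ℝ → Fin N → ℝ)
    (hw : ∀ t : ℝ, w t = ∑ j ∈ Finset.range (p + 1),
        t ^ j • (phi j (t • A)).mulVec (b j))
    (ti τi : ℝ) (wt : ℕ → Fin N → ℝ)
    (hwt0 : wt 0 = w ti)
    (hwt : ∀ j : ℕ, 1 ≤ j → j ≤ p →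
      wt j = A.mulVec (wt (j - 1)) +
        ∑ ℓ ∈ Finset.range (p - j + 1), (ti ^ ℓ / (ℓ ! : ℝ)) • b (j + ℓ)) :
    w (ti + τi)
      = τi ^ p • (phi p (τi • A)).mulVec (wt p) +
        ∑ j ∈ Finset.range p, (τi ^ j / (j ! : ℝ)) • wt j := by
  classical
  set K : ℝ := max 1 ((N : ℝ) * ‖A‖) with hK
  set D : ℝ := ∑ j ∈ Finset.range (p + 1), ‖b j‖ with hD
  set c : ℕ → Fin N → ℝ := Stmt13Aux.cseq A b p with hc
  set d : ℕ → Fin N → ℝ := Stmt13Aux.dseq A b p ti with hd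
  -- `w` as a power series
  have hw' : ∀ t : ℝ, HasSum (fun m => t ^ m • c m) (w t) := by
    intro t
    have hterm : ∀ j ∈ Finset.range (p + 1),
        HasSum (fun m => if j ≤ m then (t ^ m * ((m : ℕ)! : ℝ)⁻¹) • (A ^ (m - j)).mulVec (b j)
            else 0)
          (t ^ j • (phi j (t • A)).mulVec (b j)) := by
      intro j _
      have h1 := (Stmt13Aux.phi_mulVec_hasSum A j t (b j)).const_smul (t ^ j)
      have h2 : (fun n : ℕ => t ^ j • (t ^ n * (((n + j)! : ℝ))⁻¹) • (A ^ n).mulVec (b j))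
          = fun n : ℕ => (if j ≤ n + j then
              (t ^ (n + j) * (((n + j) : ℕ)! : ℝ)⁻¹) • (A ^ ((n + j) - j)).mulVec (b j)
            else 0) := by
        funext n
        rw [if_pos (Nat.le_add_left j n), smul_smul]
        have : (n + j) - j = n := by omega
        rw [this]
        congr 1
        rw [pow_add]; ring
      rw [h2] at h1
      refine (hasSum_nat_add_iff' (f := fun m => if j ≤ m then
          (t ^ m * ((m : ℕ)! : ℝ)⁻¹) • (A ^ (m - j)).mulVec (b j) else 0) j).mp ?_
      have h4 : ∑ i ∈ Finset.range j, (if j ≤ i then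
          (t ^ i * ((i : ℕ)! : ℝ)⁻¹) • (A ^ (i - j)).mulVec (b j) else 0) = 0 := by
        refine Finset.sum_eq_zero fun i hi => ?_
        rw [if_neg]
        simp only [Finset.mem_range] at hi
        omega
      rw [h4, sub_zero]
      exact h1
    have h := hasSum_sum hterm
    have heq : (fun m => ∑ j ∈ Finset.range (p + 1),
        (if j ≤ m then (t ^ m * ((m : ℕ)! : ℝ)⁻¹) • (A ^ (m - j)).mulVec (b j) else 0))
        = fun m => t ^ m • c m := by
      funext m
      rw [hc]
      show _ = t ^ m • Stmt13Aux.cseq A b p m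
      rw [Stmt13Aux.cseq, smul_smul, Finset.smul_sum]
      refine Finset.sum_congr rfl fun j _ => ?_
      by_cases hj : j ≤ m
      · rw [if_pos hj, if_pos hj]
      · rw [if_neg hj, if_neg hj, smul_zero]
    rw [heq] at h
    rw [hw t]
    exact h
  -- the recursively defined vectors agree with the derivative series
  have hwt_eq : ∀ j, j ≤ p → wt j = d j := by
    intro j
    induction j with
    | zero =>
        intro _
        rw [hwt0, ← (hw' ti).tsum_eq, hd]
        rw [Stmt13Aux.dseq]
        refine tsum_congr fun m => ?_
        rw [Nat.add_zero, div_self (Nat.cast_ne_zero.mpr (Nat.factorial_ne_zero m)), one_mul]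
    | succ i ih =>
        intro hip
        rw [hwt (i + 1) (by omega) hip]
        simp only [Nat.add_sub_cancel]
        rw [ih (by omega), hd, Stmt13Aux.A_mulVec_dseq A b p ti i hip, sub_add_cancel]
  -- the double series
  set g : ℕ × ℕ → Fin N → ℝ := fun q =>
    ((((q.2 + q.1).choose q.1 : ℕ) : ℝ) * τi ^ q.1 * ti ^ q.2) • c (q.2 + q.1) with hg
  have hgbound : ∀ q : ℕ × ℕ,
      ‖g q‖ ≤ (D * ((|τi| * K) ^ q.1 / (q.1)!)) * ((|ti| * K) ^ q.2 / (q.2)!) := by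
    rintro ⟨j, m⟩
    rw [hg]
    show ‖((((m + j).choose j : ℕ) : ℝ) * τi ^ j * ti ^ m) • c (m + j)‖ ≤ _
    rw [norm_smul]
    have hch : (((m + j).choose j : ℕ) : ℝ) = ((m + j)! : ℝ) / ((j ! : ℝ) * (m ! : ℝ)) := by
      rw [Nat.cast_choose ℝ (Nat.le_add_left j m)]
      have : m + j - j = m := by omega
      rw [this]
    have e1 : ((m + j)! : ℝ) ≠ 0 := Nat.cast_ne_zero.mpr (Nat.factorial_ne_zero (m + j))
    have e2 : ((m)! : ℝ) ≠ 0 := Nat.cast_ne_zero.mpr (Nat.factorial_ne_zero m)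
    have e3 : ((j)! : ℝ) ≠ 0 := Nat.cast_ne_zero.mpr (Nat.factorial_ne_zero j)
    calc ‖(((m + j).choose j : ℕ) : ℝ) * τi ^ j * ti ^ m‖ * ‖c (m + j)‖
        ≤ ‖(((m + j).choose j : ℕ) : ℝ) * τi ^ j * ti ^ m‖ * ((D * K ^ (m + j)) / (m + j)!) := by
          refine mul_le_mul_of_nonneg_left ?_ (norm_nonneg _)
          rw [hc, hK, hD]
          exact Stmt13Aux.cseq_norm_le A b p (m + j)
      _ = (D * ((|τi| * K) ^ j / (j)!)) * ((|ti| * K) ^ m / (m)!) := by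
          rw [Real.norm_eq_abs, abs_mul, abs_mul, abs_pow, abs_pow,
            abs_of_nonneg (by positivity : (0:ℝ) ≤ (((m + j).choose j : ℕ) : ℝ)), hch,
            pow_add, mul_pow, mul_pow]
          field_simp
  have hgsum : Summable g := by
    refine Summable.of_norm_bounded ?_ hgbound
    have h1 : Summable (fun j : ℕ => D * ((|τi| * K) ^ j / (j)!)) :=
      (Real.summable_pow_div_factorial _).mul_left _
    have h2 : Summable (fun m : ℕ => (|ti| * K) ^ m / (m)!) :=
      Real.summable_pow_div_factorial _
    exact h1.mul_of_nonneg h2 (fun j => by positivity) (fun m => by positivity)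
  -- left-hand side
  have hL : ∑' q : ℕ × ℕ, g q = w (ti + τi) := by
    have e0 : ∑' (x : Σ n : ℕ, {x // x ∈ Finset.HasAntidiagonal.antidiagonal n}),
        g (Finset.HasAntidiagonal.sigmaAntidiagonalEquivProd x) = ∑' q : ℕ × ℕ, g q :=
      Finset.HasAntidiagonal.sigmaAntidiagonalEquivProd.tsum_eq g
    rw [← e0]
    have esum : Summable (fun x : Σ n : ℕ, {x // x ∈ Finset.HasAntidiagonal.antidiagonal n} =>
        g (Finset.HasAntidiagonal.sigmaAntidiagonalEquivProd x)) :=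
      Finset.HasAntidiagonal.sigmaAntidiagonalEquivProd.summable_iff.mpr hgsum
    rw [Summable.tsum_sigma' (fun n => (hasSum_fintype _).summable) esum]
    rw [← (hw' (ti + τi)).tsum_eq]
    refine tsum_congr fun n => ?_
    have hfin : ∑' (x : {x // x ∈ Finset.HasAntidiagonal.antidiagonal n}), g x
        = ∑ kl ∈ Finset.HasAntidiagonal.antidiagonal n, g kl := by
      rw [tsum_fintype]
      exact Finset.sum_finset_coe _ _
    rw [show (∑' (x : {x // x ∈ Finset.HasAntidiagonal.antidiagonal n}),
        g (Finset.HasAntidiagonal.sigmaAntidiagonalEquivProd ⟨n, x⟩)) = ∑' (x : {x // x ∈ Finset.HasAntidiagonal.antidiagonal n}),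
        g x from rfl, hfin]
    rw [Finset.Nat.sum_antidiagonal_eq_sum_range_succ_mk]
    have hterm : ∀ k ∈ Finset.range (n + 1),
        g (k, n - k) = (((n.choose k : ℕ) : ℝ) * τi ^ k * ti ^ (n - k)) • c n := by
      intro k hk
      simp only [Finset.mem_range] at hk
      rw [hg]
      show ((((n - k + k).choose k : ℕ) : ℝ) * τi ^ k * ti ^ (n - k)) • c (n - k + k) = _
      have hnk : n - k + k = n := by omega
      rw [hnk]
    rw [Finset.sum_congr rfl hterm, ← Finset.sum_smul]
    congr 1
    rw [add_comm ti τi, add_pow]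
    refine Finset.sum_congr rfl fun k _ => ?_
    push_cast
    ring
  -- right-hand side
  have hf_eq : ∀ j : ℕ, ∑' m : ℕ, g (j, m) = (τi ^ j / (j ! : ℝ)) • d j := by
    intro j
    rw [hd]
    have h1 := ((Stmt13Aux.summable_dterm A b p ti j).hasSum.const_smul
      (τi ^ j / (j ! : ℝ))).tsum_eq
    rw [show Stmt13Aux.dseq A b p ti j
      = ∑' m : ℕ, ((((m + j)! : ℝ) / (m ! : ℝ)) * ti ^ m) • Stmt13Aux.cseq A b p (m + j)
      from rfl, ← h1]
    refine tsum_congr fun m => ?_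
    rw [hg]
    show ((((m + j).choose j : ℕ) : ℝ) * τi ^ j * ti ^ m) • c (m + j) = _
    rw [smul_smul, hc]
    congr 1
    have hch : (((m + j).choose j : ℕ) : ℝ) = ((m + j)! : ℝ) / ((j ! : ℝ) * (m ! : ℝ)) := by
      rw [Nat.cast_choose ℝ (Nat.le_add_left j m)]
      have : m + j - j = m := by omega
      rw [this]
    have e1 : ((m)! : ℝ) ≠ 0 := Nat.cast_ne_zero.mpr (Nat.factorial_ne_zero m)
    have e3 : ((j)! : ℝ) ≠ 0 := Nat.cast_ne_zero.mpr (Nat.factorial_ne_zero j)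
    rw [hch]
    field_simp
  have hfsum : Summable (fun j : ℕ => (τi ^ j / (j ! : ℝ)) • d j) := by
    refine Summable.of_norm_bounded
      (g := fun j => (D * Real.exp (|ti| * K)) * ((|τi| * K) ^ j / j !))
      ((Real.summable_pow_div_factorial _).mul_left _) fun j => ?_
    rw [norm_smul, Real.norm_eq_abs, abs_div, abs_pow,
      abs_of_nonneg (by positivity : (0:ℝ) ≤ ((j)! : ℝ))]
    have hdn : ‖d j‖ ≤ (D * K ^ j) * Real.exp (|ti| * K) := by
      rw [hd, hD, hK]
      exact Stmt13Aux.dseq_norm_le A b p ti j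
    calc |τi| ^ j / (j !) * ‖d j‖ ≤ |τi| ^ j / (j !) * ((D * K ^ j) * Real.exp (|ti| * K)) := by
          refine mul_le_mul_of_nonneg_left hdn (by positivity)
      _ = (D * Real.exp (|ti| * K)) * ((|τi| * K) ^ j / j !) := by
          rw [mul_pow]
          field_simp
  have hphi : (phi p (τi • A)).mulVec (d p)
      = ∑' n : ℕ, (τi ^ n * (((n + p)! : ℝ))⁻¹) • d (n + p) := by
    rw [← (Stmt13Aux.phi_mulVec_hasSum A p τi (d p)).tsum_eq]
    refine tsum_congr fun n => ?_
    congr 1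
    rw [hd, Stmt13Aux.pow_mulVec_dseq A b p ti n]
  have hR : ∑' q : ℕ × ℕ, g q
      = ∑ j ∈ Finset.range p, (τi ^ j / (j ! : ℝ)) • d j
        + τi ^ p • (phi p (τi • A)).mulVec (d p) := by
    rw [Summable.tsum_prod' hgsum hgsum.prod_factor]
    have : (fun j : ℕ => ∑' m : ℕ, g (j, m)) = fun j : ℕ => (τi ^ j / (j ! : ℝ)) • d j :=
      funext hf_eq
    rw [this, ← Summable.sum_add_tsum_nat_add p hfsum]
    congr 1
    rw [hphi, ← ((Summable.hasSum ?_).const_smul (τi ^ p)).tsum_eq]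
    · refine tsum_congr fun n => ?_
      rw [smul_smul]
      congr 1
      rw [pow_add]
      field_simp
    · -- summability of the inner series
      have hs := (Stmt13Aux.phi_mulVec_hasSum A p τi (d p)).summable
      refine hs.congr fun n => ?_
      congr 1
      rw [hd, Stmt13Aux.pow_mulVec_dseq A b p ti n]
  -- conclusion
  have hwtp : wt p = d p := hwt_eq p le_rfl
  have hsum_eq : ∑ j ∈ Finset.range p, (τi ^ j / (j ! : ℝ)) • wt j
      = ∑ j ∈ Finset.range p, (τi ^ j / (j ! : ℝ)) • d j := by
    refine Finset.sum_congr rfl fun j hj => ?_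
    simp only [Finset.mem_range] at hj
    rw [hwt_eq j (by omega)]
  rw [hwtp, hsum_eq, ← hL, hR, add_comm]
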